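/- Left exact functors extend to left exact functors on 2-term complexes: let Φ be an additive left exact functor between abelian categories (e.g. of modules), and let Y : E → F be a butterfly with F⁻¹ injective. Then the diagonal 0 → F⁻¹ → Y → E⁰ → 0 is split exact, hence 0 → Φ(F⁻¹) → Φ(Y) → Φ(E⁰) → 0 is exact, and (Φ(Y), Φ(i), Φ(j), Φ(p), Φ(q)) is a butterfly from Φ(E) = [Φ E⁻¹ → Φ E⁰] to Φ(F). -/

import Mathlib

open CategoryTheory

/-- a left exact additive functor `Φ` on abelian groups extends to
butterflies with injective `F⁻¹`: the diagonal `0 → F⁻¹ → Y → E⁰ → 0` of such a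
butterfly splits, hence its image under `Φ` is exact, and `Φ` of the butterfly data is
again a butterfly from `Φ(E)` to `Φ(F)`. -/
theorem left_exact_functor_of_butterfly
    (Φ : AddCommGrpCat.{0} ⥤ AddCommGrpCat.{0}) [Φ.Additive]
    (hΦ : ∀ (A B C : AddCommGrpCat) (f : A ⟶ B) (g : B ⟶ C),
      Function.Injective f → Function.Exact f g →
      Function.Injective (Φ.map f) ∧ Function.Exact (Φ.map f) (Φ.map g))
    (E1 E0 F1 F0 : AddCommGrpCat) (dE : E1 ⟶ E0) (dF : F1 ⟶ F0)
    (Y : AddCommGrpCat) (j : E1 ⟶ Y) (q : Y ⟶ E0) (i : F1 ⟶ Y) (p : Y ⟶ F0)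
    (hinj : Function.Injective i) (hsurj : Function.Surjective q)
    (hex : Function.Exact i q)
    (hpj : ∀ e, p (j e) = 0) (hqj : ∀ e, q (j e) = dE e) (hpi : ∀ f, p (i f) = - dF f)
    (hF1 : Injective F1) :
    (∃ s : E0 ⟶ Y, ∀ x, q (s x) = x) ∧
    Function.Injective (Φ.map i) ∧ Function.Surjective (Φ.map q) ∧
    Function.Exact (Φ.map i) (Φ.map q) ∧
    (∀ e, Φ.map p (Φ.map j e) = 0) ∧ (∀ e, Φ.map q (Φ.map j e) = Φ.map dE e) ∧
    (∀ f, Φ.map p (Φ.map i f) = - Φ.map dF f) := by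
  -- retraction of i from injectivity of F1
  haveI : Mono i := (AddCommGrpCat.mono_iff_injective i).mpr hinj
  let r : Y ⟶ F1 := Injective.factorThru (𝟙 F1) i
  have hri : ∀ a, r (i a) = a := by
    intro a
    show (i ≫ r) a = a
    rw [Injective.comp_factorThru]
    rfl
  have hqi : ∀ a, q (i a) = 0 := fun a => (hex (i a)).mpr ⟨a, rfl⟩
  -- choice section
  choose σ hσ using hsurj
  let sfun : E0 → Y := fun x => σ x - i (r (σ x))
  have hqs : ∀ x, q (sfun x) = x := by
    intro x; simp [sfun, map_sub, hqi, hσ]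
  have hrs : ∀ x, r (sfun x) = 0 := by
    intro x; simp [sfun, map_sub, hri]
  have huniq : ∀ (x : E0) (y : Y), q y = x → r y = 0 → y = sfun x := by
    intro x y hq hr
    have h1 : q (y - sfun x) = 0 := by simp [map_sub, hq, hqs]
    obtain ⟨a, ha⟩ := (hex _).mp h1
    have : r (y - sfun x) = 0 := by simp [map_sub, hr, hrs]
    rw [← ha, hri] at this
    have : y - sfun x = 0 := by rw [← ha, this, map_zero]
    exact sub_eq_zero.mp this
  have hadd : ∀ x y, sfun (x + y) = sfun x + sfun y := by
    intro x y
    exact (huniq (x + y) (sfun x + sfun y)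
      (by simp [map_add, hqs]) (by simp [map_add, hrs])).symm
  let s : E0 ⟶ Y := AddCommGrpCat.ofHom (AddMonoidHom.mk' sfun hadd)
  have hs : ∀ x, q (s x) = x := hqs
  have hsq : s ≫ q = 𝟙 E0 := by
    ext x; simpa using hs x
  refine ⟨⟨s, hs⟩, (hΦ _ _ _ i q hinj hex).1, ?_, (hΦ _ _ _ i q hinj hex).2, ?_, ?_, ?_⟩
  · intro z
    refine ⟨Φ.map s z, ?_⟩
    have : Φ.map s ≫ Φ.map q = 𝟙 _ := by rw [← Φ.map_comp, hsq, Φ.map_id]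
    have := congrArg (fun (f : Φ.obj E0 ⟶ Φ.obj E0) => f z) this
    simpa using this
  · intro e
    have hjp : j ≫ p = 0 := by ext x; simpa using hpj x
    have : Φ.map j ≫ Φ.map p = 0 := by rw [← Φ.map_comp, hjp, Φ.map_zero]
    have := congrArg (fun (f : Φ.obj E1 ⟶ Φ.obj F0) => f e) this
    simpa using this
  · intro e
    have hjq : j ≫ q = dE := by ext x; simpa using hqj x
    have : Φ.map j ≫ Φ.map q = Φ.map dE := by rw [← Φ.map_comp, hjq]
    have := congrArg (fun (f : Φ.obj E1 ⟶ Φ.obj E0) => f e) this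
    simpa using this
  · intro f
    have hip : i ≫ p = -dF := by ext x; simpa using hpi x
    have : Φ.map i ≫ Φ.map p = -(Φ.map dF) := by rw [← Φ.map_comp, hip, Φ.map_neg]
    have := congrArg (fun (g : Φ.obj F1 ⟶ Φ.obj F0) => g f) this
    simpa using this
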